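/- Let t₁, …, tₙ be real numbers such that t₁, …, tₙ, 1 are linearly independent over ℚ. Then the set of real numbers φ such that t₁ + φ, …, tₙ + φ, 1 are linearly independent over ℚ is dense in ℝ. -/

import Mathlib

/-- If `t₁, …, tₙ, 1` are `ℚ`-linearly independent, then the set of `φ` such that
`t₁ + φ, …, tₙ + φ, 1` are `ℚ`-linearly independent is dense in `ℝ`. -/
theorem lissajous_stmt1 (n : ℕ) (t : Fin n → ℝ)
    (hind : ∀ (q : Fin n → ℚ) (q0 : ℚ), (∑ i, (q i : ℝ) * t i) + (q0 : ℝ) = 0 →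
      (∀ i, q i = 0) ∧ q0 = 0) :
    Dense {φ : ℝ | ∀ (q : Fin n → ℚ) (q0 : ℚ), (∑ i, (q i : ℝ) * (t i + φ)) + (q0 : ℝ) = 0 →
      (∀ i, q i = 0) ∧ q0 = 0} := by
  set f : (Fin n → ℚ) × ℚ → ℝ := fun p =>
    -(((∑ i, (p.1 i : ℝ) * t i) + (p.2 : ℝ)) / (∑ i, (p.1 i : ℝ))) with hf
  have hcount : (Set.range f).Countable := Set.countable_range f
  have hdense : Dense (Set.range f)ᶜ := hcount.dense_compl ℝ
  apply hdense.mono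
  intro φ hφ q q0 heq
  by_contra hcon
  apply hφ
  have hs : (∑ i, (q i : ℝ)) ≠ 0 := by
    intro hs0
    -- then ∑ qᵢ tᵢ + q0 = 0, so by hind q = 0, q0 = 0, contradicting hcon
    have : (∑ i, (q i : ℝ) * t i) + (q0 : ℝ) = 0 := by
      have := heq
      simp only [mul_add] at this
      rw [Finset.sum_add_distrib, ← Finset.sum_mul, hs0, zero_mul, add_zero] at this
      linarith
    exact hcon (hind q q0 this)
  refine ⟨(q, q0), ?_⟩
  have : (∑ i, (q i : ℝ) * t i) + (q0 : ℝ) + (∑ i, (q i : ℝ)) * φ = 0 := by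
    simp only [mul_add] at heq
    rw [Finset.sum_add_distrib, ← Finset.sum_mul] at heq
    linarith
  simp only [hf]
  field_simp
  linarith
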